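/- Positive bias of the second-interval incidence ratio under sharp no waning of the placebo. Assume, for both a = 0 and a = 1, the hypotheses of the second-interval incidence decomposition (Consistency, Exposure necessity, Exclusion restriction, Treatment exchangeability, Positivity, Exposure exchangeability, Extended exposure exchangeability, 0 < P(E1[a]=1) < 1 and P(E1[a]=1, Y1[a,1]=0) > 0), together with Blinding, sharp no waning of the placebo (Y1[0,1] = Y2[0,1] a.s.), E[ΔY2 | A=0] > 0 and E[Y2[0,1]] > 0. Then IR2 = (1 − VE2ch) + P(Y2[1,1]=1, Y1[1,1]=0) · P(E2[1,1]=1 | E1[1]=1, Y1[1,1]=0) · P(E1[1]=1) / E[ΔY2 | A=0]. In particular, IR2 ≥ 1 − VE2ch: the observed second-interval incidence ratio overestimates one minus the second-interval challenge efficacy. -/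

import Mathlib

open MeasureTheory ProbabilityTheory
open scoped ProbabilityTheory


private lemma binInt {Ω : Type*} [MeasurableSpace Ω] (ν : Measure Ω) [IsFiniteMeasure ν]
    {f : Ω → ℝ} (hm : Measurable f) (hr : ∀ ω, f ω = 0 ∨ f ω = 1) :
    ∫ ω, f ω ∂ν = (ν {ω | f ω = 1}).toReal := by
  have h : ∀ ω, f ω = Set.indicator {ω | f ω = 1} (fun _ => (1:ℝ)) ω := by
    intro ω; rcases hr ω with h | h <;> simp [Set.indicator, h]
  calc ∫ ω, f ω ∂ν = ∫ ω, Set.indicator {ω | f ω = 1} (fun _ => (1:ℝ)) ω ∂ν := by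
        exact integral_congr_ae (Filter.Eventually.of_forall h)
    _ = (ν {ω | f ω = 1}).toReal := by
        rw [integral_indicator_const (1:ℝ) (show MeasurableSet {ω | f ω = 1} from hm (measurableSet_singleton 1))]; simp; rfl

private lemma condSplit {Ω : Type*} [MeasurableSpace Ω] {μ : Measure Ω} [IsFiniteMeasure μ]
    {B : Set Ω} (hB : MeasurableSet B) (h : μ B ≠ 0) (t : Set Ω) :
    μ (B ∩ t) = μ B * μ[|B] t := by
  rw [cond_apply hB, ← mul_assoc, ENNReal.mul_inv_cancel h (measure_ne_top μ B), one_mul]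

private lemma indepSets {Ω : Type*} [MeasurableSpace Ω] {μ : Measure Ω}
    {f g : Ω → ℝ} (h : IndepFun f g μ) (c d : ℝ) :
    μ ({ω | f ω = c} ∩ {ω | g ω = d}) = μ {ω | f ω = c} * μ {ω | g ω = d} :=
  h.measure_inter_preimage_eq_mul _ _ (measurableSet_singleton c) (measurableSet_singleton d)

/-- Positive bias of the second-interval incidence ratio under sharp no waning of the placebo. -/
theorem second_interval_incidence_ratio_bias
    {Ω : Type*} [MeasurableSpace Ω] (μ : Measure Ω) [IsProbabilityMeasure μ]
    (A E1 E2 DY1 DY2 : Ω → ℝ)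
    (E1p : ℝ → Ω → ℝ) (E2p Y1p Y2p Wp : ℝ → ℝ → Ω → ℝ)
    (hAm : Measurable A) (hE1m : Measurable E1) (hE2m : Measurable E2)
    (hDY1m : Measurable DY1) (hDY2m : Measurable DY2)
    (hE1pm : ∀ a ∈ ({0, 1} : Set ℝ), Measurable (E1p a))
    (hE2pm : ∀ a ∈ ({0, 1} : Set ℝ), ∀ e1 ∈ ({0, 1} : Set ℝ), Measurable (E2p a e1))
    (hY1pm : ∀ a ∈ ({0, 1} : Set ℝ), ∀ e1 ∈ ({0, 1} : Set ℝ), Measurable (Y1p a e1))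
    (hY2pm : ∀ a ∈ ({0, 1} : Set ℝ), ∀ e2 ∈ ({0, 1} : Set ℝ), Measurable (Y2p a e2))
    (hWpm : ∀ a ∈ ({0, 1} : Set ℝ), ∀ e1 ∈ ({0, 1} : Set ℝ), Measurable (Wp a e1))
    (hAr : ∀ ω, A ω = 0 ∨ A ω = 1) (hE1r : ∀ ω, E1 ω = 0 ∨ E1 ω = 1)
    (hE2r : ∀ ω, E2 ω = 0 ∨ E2 ω = 1)
    (hDY1r : ∀ ω, DY1 ω = 0 ∨ DY1 ω = 1) (hDY2r : ∀ ω, DY2 ω = 0 ∨ DY2 ω = 1)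
    (hE1pr : ∀ a ∈ ({0, 1} : Set ℝ), ∀ ω, E1p a ω = 0 ∨ E1p a ω = 1)
    (hE2pr : ∀ a ∈ ({0, 1} : Set ℝ), ∀ e1 ∈ ({0, 1} : Set ℝ), ∀ ω,
      E2p a e1 ω = 0 ∨ E2p a e1 ω = 1)
    (hY1pr : ∀ a ∈ ({0, 1} : Set ℝ), ∀ e1 ∈ ({0, 1} : Set ℝ), ∀ ω,
      Y1p a e1 ω = 0 ∨ Y1p a e1 ω = 1)
    (hY2pr : ∀ a ∈ ({0, 1} : Set ℝ), ∀ e2 ∈ ({0, 1} : Set ℝ), ∀ ω,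
      Y2p a e2 ω = 0 ∨ Y2p a e2 ω = 1)
    (hWpr : ∀ a ∈ ({0, 1} : Set ℝ), ∀ e1 ∈ ({0, 1} : Set ℝ), ∀ ω,
      Wp a e1 ω = 0 ∨ Wp a e1 ω = 1)
    (hmono : ∀ ω, DY1 ω = 1 → DY2 ω = 0)
    -- Consistency
    (hconsE1 : ∀ a ∈ ({0, 1} : Set ℝ), ∀ᵐ ω ∂μ, A ω = a → E1 ω = E1p a ω)
    (hconsY1 : ∀ a ∈ ({0, 1} : Set ℝ), ∀ e1 ∈ ({0, 1} : Set ℝ),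
      ∀ᵐ ω ∂μ, A ω = a → E1 ω = e1 → DY1 ω = Y1p a e1 ω)
    (hconsE2 : ∀ a ∈ ({0, 1} : Set ℝ), ∀ e1 ∈ ({0, 1} : Set ℝ),
      ∀ᵐ ω ∂μ, A ω = a → E1 ω = e1 → E2 ω = E2p a e1 ω)
    (hconsY2 : ∀ a ∈ ({0, 1} : Set ℝ), ∀ e2 ∈ ({0, 1} : Set ℝ),
      ∀ᵐ ω ∂μ, A ω = a → E1 ω = 0 → E2 ω = e2 → DY2 ω = Y2p a e2 ω)
    (hconsW : ∀ a ∈ ({0, 1} : Set ℝ), ∀ e1 ∈ ({0, 1} : Set ℝ),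
      ∀ᵐ ω ∂μ, A ω = a → E1 ω = e1 → DY1 ω = 0 → E2 ω = 1 → DY2 ω = Wp a e1 ω)
    -- Exposure necessity
    (hnecY1 : ∀ a ∈ ({0, 1} : Set ℝ), ∀ᵐ ω ∂μ, Y1p a 0 ω = 0)
    (hnecY2 : ∀ a ∈ ({0, 1} : Set ℝ), ∀ᵐ ω ∂μ, Y2p a 0 ω = 0)
    (hnecE2 : ∀ᵐ ω ∂μ, E2 ω = 0 → DY2 ω = 0)
    -- Exclusion restriction
    (hexcl : ∀ a ∈ ({0, 1} : Set ℝ), ∀ᵐ ω ∂μ, Wp a 1 ω = Y2p a 1 ω ∧ Wp a 0 ω = Y2p a 1 ω)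
    -- Blinding
    (hblind1 : ∀ᵐ ω ∂μ, E1p 0 ω = E1p 1 ω)
    (hblind2 : ∀ᵐ ω ∂μ, E2p 0 0 ω = E2p 1 0 ω)
    -- Treatment exchangeability
    (hexch : IndepFun A (fun ω => ![E1p 0 ω, E1p 1 ω,
      E2p 0 0 ω, E2p 0 1 ω, E2p 1 0 ω, E2p 1 1 ω,
      Y1p 0 0 ω, Y1p 0 1 ω, Y1p 1 0 ω, Y1p 1 1 ω,
      Y2p 0 0 ω, Y2p 0 1 ω, Y2p 1 0 ω, Y2p 1 1 ω,
      Wp 0 0 ω, Wp 0 1 ω, Wp 1 0 ω, Wp 1 1 ω]) μ)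
    -- Positivity
    (hpos : 0 < (μ {ω | A ω = 1}).toReal ∧ (μ {ω | A ω = 1}).toReal < 1)
    -- Exposure exchangeability
    (heeY1 : ∀ a ∈ ({0, 1} : Set ℝ), ∀ e1 ∈ ({0, 1} : Set ℝ), IndepFun (E1p a) (Y1p a e1) μ)
    (heeY2cond : ∀ a ∈ ({0, 1} : Set ℝ), ∀ e2 ∈ ({0, 1} : Set ℝ), ∀ e ∈ ({0, 1} : Set ℝ),
      IndepFun (E1p a) (Y2p a e2) (μ[|{ω | E2p a 0 ω = e}]))
    (heeE2 : ∀ a ∈ ({0, 1} : Set ℝ), ∀ e2 ∈ ({0, 1} : Set ℝ), IndepFun (E2p a 0) (Y2p a e2) μ)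
    -- Extended exposure exchangeability
    (hextee1 : ∀ a ∈ ({0, 1} : Set ℝ), ∀ e ∈ ({0, 1} : Set ℝ),
      IndepFun (E1p a) (Wp a 1) (μ[|{ω | Y1p a 1 ω = 0 ∧ E2p a 1 ω = e}]))
    (hextee2 : ∀ a ∈ ({0, 1} : Set ℝ),
      IndepFun (E2p a 1) (Wp a 1) (μ[|{ω | Y1p a 1 ω = 0}]))
    -- Nondegeneracy (for both arms)
    (hE1pos : ∀ a ∈ ({0, 1} : Set ℝ), 0 < (μ {ω | E1p a ω = 1}).toReal)
    (hE1lt : ∀ a ∈ ({0, 1} : Set ℝ), (μ {ω | E1p a ω = 1}).toReal < 1)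
    (hE1Y1 : ∀ a ∈ ({0, 1} : Set ℝ), 0 < (μ {ω | E1p a ω = 1 ∧ Y1p a 1 ω = 0}).toReal)
    -- Sharp no waning of the placebo
    (hnull0 : ∀ᵐ ω ∂μ, Y1p 0 1 ω = Y2p 0 1 ω)
    (hd2 : 0 < ∫ ω, DY2 ω ∂(μ[|{ω | A ω = 0}]))
    (hd5 : 0 < ∫ ω, Y2p 0 1 ω ∂μ) :
    (∫ ω, DY2 ω ∂(μ[|{ω | A ω = 1}])) / (∫ ω, DY2 ω ∂(μ[|{ω | A ω = 0}])) =
      (∫ ω, Y2p 1 1 ω ∂μ) / (∫ ω, Y2p 0 1 ω ∂μ) +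
        (μ {ω | Y2p 1 1 ω = 1 ∧ Y1p 1 1 ω = 0}).toReal *
          ((μ[|{ω | E1p 1 ω = 1 ∧ Y1p 1 1 ω = 0}]) {ω | E2p 1 1 ω = 1}).toReal *
          (μ {ω | E1p 1 ω = 1}).toReal / (∫ ω, DY2 ω ∂(μ[|{ω | A ω = 0}])) ∧
    (∫ ω, Y2p 1 1 ω ∂μ) / (∫ ω, Y2p 0 1 ω ∂μ) ≤
      (∫ ω, DY2 ω ∂(μ[|{ω | A ω = 1}])) / (∫ ω, DY2 ω ∂(μ[|{ω | A ω = 0}])) := by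
  have h0 : (0:ℝ) ∈ ({0,1}:Set ℝ) := by norm_num
  have h1 : (1:ℝ) ∈ ({0,1}:Set ℝ) := by norm_num
  -- Arm-wise a.e. decomposition of the event {A = a, DY2 = 1}
  have keyA : ∀ a ∈ ({0,1}:Set ℝ),
      μ ({ω | A ω = a} ∩ {ω | DY2 ω = 1}) =
      μ ({ω | A ω = a} ∩ ({ω | E1p a ω = 0 ∧ E2p a 0 ω = 1 ∧ Y2p a 1 ω = 1} ∪
        {ω | E1p a ω = 1 ∧ Y1p a 1 ω = 0 ∧ E2p a 1 ω = 1 ∧ Wp a 1 ω = 1})) := by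
    intro a ha
    apply measure_congr
    rw [Filter.eventuallyEq_set]
    filter_upwards [hconsE1 a ha, hconsY1 a ha 1 h1, hconsE2 a ha 0 h0, hconsE2 a ha 1 h1,
      hconsY2 a ha 1 h1, hconsW a ha 1 h1, hnecE2] with ω cE1 cY1 cE20 cE21 cY2 cW nE2
    simp only [Set.mem_inter_iff, Set.mem_union, Set.mem_setOf_eq]
    constructor
    · rintro ⟨hA, hD⟩
      refine ⟨hA, ?_⟩
      have hE1e := cE1 hA
      rcases hE1r ω with h10 | h11
      · left
        have hE2e := cE20 hA h10
        rcases hE2r ω with h20 | h21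
        · exact absurd (nE2 h20) (by rw [hD]; norm_num)
        · exact ⟨by rw [← hE1e, h10], by rw [← hE2e, h21], by rw [← cY2 hA h10 h21, hD]⟩
      · right
        have hY1e := cY1 hA h11
        have hE2e := cE21 hA h11
        have hDY1 : DY1 ω = 0 := by
          rcases hDY1r ω with h | h
          · exact h
          · exact absurd (hmono ω h) (by rw [hD]; norm_num)
        rcases hE2r ω with h20 | h21
        · exact absurd (nE2 h20) (by rw [hD]; norm_num)
        · exact ⟨by rw [← hE1e, h11], by rw [← hY1e, hDY1], by rw [← hE2e, h21],
            by rw [← cW hA h11 hDY1 h21, hD]⟩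
    · rintro ⟨hA, hS⟩
      refine ⟨hA, ?_⟩
      have hE1e := cE1 hA
      rcases hS with ⟨hp1, hp2, hp3⟩ | ⟨hp1, hp2, hp3, hp4⟩
      · have h10 : E1 ω = 0 := by rw [hE1e, hp1]
        have h21 : E2 ω = 1 := by rw [cE20 hA h10, hp2]
        rw [cY2 hA h10 h21, hp3]
      · have h11 : E1 ω = 1 := by rw [hE1e, hp1]
        have hDY1 : DY1 ω = 0 := by rw [cY1 hA h11, hp2]
        have h21 : E2 ω = 1 := by rw [cE21 hA h11, hp3]
        rw [cW hA h11 hDY1 h21, hp4]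
  -- Treatment exchangeability applied to the decomposed event
  have hexch0 : μ ({ω | A ω = 0} ∩ ({ω | E1p 0 ω = 0 ∧ E2p 0 0 ω = 1 ∧ Y2p 0 1 ω = 1} ∪
        {ω | E1p 0 ω = 1 ∧ Y1p 0 1 ω = 0 ∧ E2p 0 1 ω = 1 ∧ Wp 0 1 ω = 1})) =
      μ {ω | A ω = 0} * μ ({ω | E1p 0 ω = 0 ∧ E2p 0 0 ω = 1 ∧ Y2p 0 1 ω = 1} ∪
        {ω | E1p 0 ω = 1 ∧ Y1p 0 1 ω = 0 ∧ E2p 0 1 ω = 1 ∧ Wp 0 1 ω = 1}) := by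
    have hTm : MeasurableSet (({x : Fin 18 → ℝ | x 0 = 0 ∧ x 2 = 1 ∧ x 11 = 1}) ∪
        {x : Fin 18 → ℝ | x 0 = 1 ∧ x 7 = 0 ∧ x 3 = 1 ∧ x 15 = 1}) := by
      apply MeasurableSet.union
      · exact ((measurable_pi_apply 0) (measurableSet_singleton 0)).inter
          (((measurable_pi_apply 2) (measurableSet_singleton 1)).inter
            ((measurable_pi_apply 11) (measurableSet_singleton 1)))
      · exact ((measurable_pi_apply 0) (measurableSet_singleton 1)).inter
          (((measurable_pi_apply 7) (measurableSet_singleton 0)).inter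
            (((measurable_pi_apply 3) (measurableSet_singleton 1)).inter
              ((measurable_pi_apply 15) (measurableSet_singleton 1))))
    exact hexch.measure_inter_preimage_eq_mul _ _ (measurableSet_singleton 0) hTm
  have hexch1 : μ ({ω | A ω = 1} ∩ ({ω | E1p 1 ω = 0 ∧ E2p 1 0 ω = 1 ∧ Y2p 1 1 ω = 1} ∪
        {ω | E1p 1 ω = 1 ∧ Y1p 1 1 ω = 0 ∧ E2p 1 1 ω = 1 ∧ Wp 1 1 ω = 1})) =
      μ {ω | A ω = 1} * μ ({ω | E1p 1 ω = 0 ∧ E2p 1 0 ω = 1 ∧ Y2p 1 1 ω = 1} ∪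
        {ω | E1p 1 ω = 1 ∧ Y1p 1 1 ω = 0 ∧ E2p 1 1 ω = 1 ∧ Wp 1 1 ω = 1}) := by
    have hTm : MeasurableSet (({x : Fin 18 → ℝ | x 1 = 0 ∧ x 4 = 1 ∧ x 13 = 1}) ∪
        {x : Fin 18 → ℝ | x 1 = 1 ∧ x 9 = 0 ∧ x 5 = 1 ∧ x 17 = 1}) := by
      apply MeasurableSet.union
      · exact ((measurable_pi_apply 1) (measurableSet_singleton 0)).inter
          (((measurable_pi_apply 4) (measurableSet_singleton 1)).inter
            ((measurable_pi_apply 13) (measurableSet_singleton 1)))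
      · exact ((measurable_pi_apply 1) (measurableSet_singleton 1)).inter
          (((measurable_pi_apply 9) (measurableSet_singleton 0)).inter
            (((measurable_pi_apply 5) (measurableSet_singleton 1)).inter
              ((measurable_pi_apply 17) (measurableSet_singleton 1))))
    exact hexch.measure_inter_preimage_eq_mul _ _ (measurableSet_singleton 1) hTm
  -- Factorization of the first branch
  have hS0eq : ∀ a ∈ ({0,1}:Set ℝ),
      μ {ω | E1p a ω = 0 ∧ E2p a 0 ω = 1 ∧ Y2p a 1 ω = 1} =
      μ {ω | E1p a ω = 0 ∧ E2p a 0 ω = 1} * μ {ω | Y2p a 1 ω = 1} := by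
    intro a ha
    have hBm : MeasurableSet {ω | E2p a 0 ω = 1} := (hE2pm a ha 0 h0) (measurableSet_singleton 1)
    have hrw : {ω | E1p a ω = 0 ∧ E2p a 0 ω = 1 ∧ Y2p a 1 ω = 1} =
        {ω | E2p a 0 ω = 1} ∩ ({ω | E1p a ω = 0} ∩ {ω | Y2p a 1 ω = 1}) := by
      ext ω; simp only [Set.mem_setOf_eq, Set.mem_inter_iff]; tauto
    have hrw2 : {ω | E1p a ω = 0 ∧ E2p a 0 ω = 1} =
        {ω | E2p a 0 ω = 1} ∩ {ω | E1p a ω = 0} := by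
      ext ω; simp only [Set.mem_setOf_eq, Set.mem_inter_iff]; tauto
    by_cases hB : μ {ω | E2p a 0 ω = 1} = 0
    · rw [hrw, hrw2, measure_mono_null Set.inter_subset_left hB,
        measure_mono_null Set.inter_subset_left hB, zero_mul]
    · have hcondY : μ[|{ω | E2p a 0 ω = 1}] {ω | Y2p a 1 ω = 1} = μ {ω | Y2p a 1 ω = 1} := by
        rw [cond_apply hBm, indepSets (heeE2 a ha 1 h1) 1 1, ← mul_assoc,
          ENNReal.inv_mul_cancel hB (measure_ne_top μ _), one_mul]
      calc μ {ω | E1p a ω = 0 ∧ E2p a 0 ω = 1 ∧ Y2p a 1 ω = 1}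
          = μ ({ω | E2p a 0 ω = 1} ∩ ({ω | E1p a ω = 0} ∩ {ω | Y2p a 1 ω = 1})) := by rw [hrw]
        _ = μ {ω | E2p a 0 ω = 1} *
            μ[|{ω | E2p a 0 ω = 1}] ({ω | E1p a ω = 0} ∩ {ω | Y2p a 1 ω = 1}) :=
            condSplit hBm hB _
        _ = μ {ω | E2p a 0 ω = 1} * (μ[|{ω | E2p a 0 ω = 1}] {ω | E1p a ω = 0} *
            μ[|{ω | E2p a 0 ω = 1}] {ω | Y2p a 1 ω = 1}) := by
            rw [indepSets (heeY2cond a ha 1 h1 1 h1) 0 1]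
        _ = (μ {ω | E2p a 0 ω = 1} * μ[|{ω | E2p a 0 ω = 1}] {ω | E1p a ω = 0}) *
            μ {ω | Y2p a 1 ω = 1} := by rw [hcondY]; ring
        _ = μ ({ω | E2p a 0 ω = 1} ∩ {ω | E1p a ω = 0}) * μ {ω | Y2p a 1 ω = 1} := by
            rw [← condSplit hBm hB]
        _ = μ {ω | E1p a ω = 0 ∧ E2p a 0 ω = 1} * μ {ω | Y2p a 1 ω = 1} := by rw [hrw2]
  -- Second branch vanishes in the placebo arm
  have hS10z : μ {ω | E1p 0 ω = 1 ∧ Y1p 0 1 ω = 0 ∧ E2p 0 1 ω = 1 ∧ Wp 0 1 ω = 1} = 0 := by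
    rw [measure_eq_zero_iff_ae_notMem]
    filter_upwards [hexcl 0 h0, hnull0] with ω hw hn
    rintro ⟨-, hy, -, hW⟩
    have : (1:ℝ) = 0 := by rw [← hW, hw.1, ← hn, hy]
    norm_num at this
  -- Factorization of the second branch in the vaccine arm
  have hECne : μ {ω | E1p 1 ω = 1 ∧ Y1p 1 1 ω = 0} ≠ 0 := by
    intro h
    have := hE1Y1 1 h1
    rw [h] at this
    simp at this
  have hECm : MeasurableSet {ω | E1p 1 ω = 1 ∧ Y1p 1 1 ω = 0} :=
    ((hE1pm 1 h1) (measurableSet_singleton 1)).inter ((hY1pm 1 h1 1 h1) (measurableSet_singleton 0))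
  have hCm : MeasurableSet {ω | Y1p 1 1 ω = 0} := (hY1pm 1 h1 1 h1) (measurableSet_singleton 0)
  have hCDm : MeasurableSet {ω | Y1p 1 1 ω = 0 ∧ E2p 1 1 ω = 1} :=
    hCm.inter ((hE2pm 1 h1 1 h1) (measurableSet_singleton 1))
  have hS11eq : μ {ω | E1p 1 ω = 1 ∧ Y1p 1 1 ω = 0 ∧ E2p 1 1 ω = 1 ∧ Wp 1 1 ω = 1} =
      μ {ω | Y2p 1 1 ω = 1 ∧ Y1p 1 1 ω = 0} *
        μ[|{ω | E1p 1 ω = 1 ∧ Y1p 1 1 ω = 0}] {ω | E2p 1 1 ω = 1} * μ {ω | E1p 1 ω = 1} := by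
    have hCW : μ ({ω | Y1p 1 1 ω = 0} ∩ {ω | Wp 1 1 ω = 1}) =
        μ {ω | Y2p 1 1 ω = 1 ∧ Y1p 1 1 ω = 0} := by
      apply measure_congr
      rw [Filter.eventuallyEq_set]
      filter_upwards [hexcl 1 h1] with ω hw
      simp only [Set.mem_inter_iff, Set.mem_setOf_eq, hw.1]
      tauto
    by_cases hCD : μ {ω | Y1p 1 1 ω = 0 ∧ E2p 1 1 ω = 1} = 0
    · have hz1 : μ {ω | E1p 1 ω = 1 ∧ Y1p 1 1 ω = 0 ∧ E2p 1 1 ω = 1 ∧ Wp 1 1 ω = 1} = 0 :=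
        measure_mono_null (fun ω h => ⟨h.2.1, h.2.2.1⟩ :
          {ω | E1p 1 ω = 1 ∧ Y1p 1 1 ω = 0 ∧ E2p 1 1 ω = 1 ∧ Wp 1 1 ω = 1} ⊆
            {ω | Y1p 1 1 ω = 0 ∧ E2p 1 1 ω = 1}) hCD
      have hz2 : μ[|{ω | E1p 1 ω = 1 ∧ Y1p 1 1 ω = 0}] {ω | E2p 1 1 ω = 1} = 0 := by
        rw [cond_apply hECm,
          measure_mono_null (fun ω h => ⟨h.1.2, h.2⟩ :
            {ω | E1p 1 ω = 1 ∧ Y1p 1 1 ω = 0} ∩ {ω | E2p 1 1 ω = 1} ⊆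
              {ω | Y1p 1 1 ω = 0 ∧ E2p 1 1 ω = 1}) hCD, mul_zero]
      rw [hz1, hz2, mul_zero, zero_mul]
    · have hCne : μ {ω | Y1p 1 1 ω = 0} ≠ 0 := by
        intro h
        exact hCD (measure_mono_null (fun ω hh => hh.1) h)
      -- rewrite the set
      have hrw : {ω | E1p 1 ω = 1 ∧ Y1p 1 1 ω = 0 ∧ E2p 1 1 ω = 1 ∧ Wp 1 1 ω = 1} =
          {ω | Y1p 1 1 ω = 0 ∧ E2p 1 1 ω = 1} ∩ ({ω | E1p 1 ω = 1} ∩ {ω | Wp 1 1 ω = 1}) := by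
        ext ω; simp only [Set.mem_setOf_eq, Set.mem_inter_iff]; tauto
      have f3 : μ {ω | Y1p 1 1 ω = 0 ∧ E2p 1 1 ω = 1} *
          μ[|{ω | Y1p 1 1 ω = 0 ∧ E2p 1 1 ω = 1}] {ω | Wp 1 1 ω = 1} =
          μ {ω | Y1p 1 1 ω = 0 ∧ E2p 1 1 ω = 1} * μ[|{ω | Y1p 1 1 ω = 0}] {ω | Wp 1 1 ω = 1} := by
        have e1 : {ω | Y1p 1 1 ω = 0 ∧ E2p 1 1 ω = 1} ∩ {ω | Wp 1 1 ω = 1} =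
            {ω | Y1p 1 1 ω = 0} ∩ ({ω | E2p 1 1 ω = 1} ∩ {ω | Wp 1 1 ω = 1}) := by
          ext ω; simp only [Set.mem_setOf_eq, Set.mem_inter_iff]; tauto
        have e2 : ({ω | Y1p 1 1 ω = 0 ∧ E2p 1 1 ω = 1} : Set Ω) =
            {ω | Y1p 1 1 ω = 0} ∩ {ω | E2p 1 1 ω = 1} := rfl
        calc μ {ω | Y1p 1 1 ω = 0 ∧ E2p 1 1 ω = 1} *
              μ[|{ω | Y1p 1 1 ω = 0 ∧ E2p 1 1 ω = 1}] {ω | Wp 1 1 ω = 1}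
            = μ ({ω | Y1p 1 1 ω = 0 ∧ E2p 1 1 ω = 1} ∩ {ω | Wp 1 1 ω = 1}) :=
              (condSplit hCDm hCD _).symm
          _ = μ ({ω | Y1p 1 1 ω = 0} ∩ ({ω | E2p 1 1 ω = 1} ∩ {ω | Wp 1 1 ω = 1})) := by rw [e1]
          _ = μ {ω | Y1p 1 1 ω = 0} *
              μ[|{ω | Y1p 1 1 ω = 0}] ({ω | E2p 1 1 ω = 1} ∩ {ω | Wp 1 1 ω = 1}) :=
              condSplit hCm hCne _
          _ = μ {ω | Y1p 1 1 ω = 0} * (μ[|{ω | Y1p 1 1 ω = 0}] {ω | E2p 1 1 ω = 1} *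
              μ[|{ω | Y1p 1 1 ω = 0}] {ω | Wp 1 1 ω = 1}) := by
              rw [indepSets (hextee2 1 h1) 1 1]
          _ = (μ {ω | Y1p 1 1 ω = 0} * μ[|{ω | Y1p 1 1 ω = 0}] {ω | E2p 1 1 ω = 1}) *
              μ[|{ω | Y1p 1 1 ω = 0}] {ω | Wp 1 1 ω = 1} := by ring
          _ = μ ({ω | Y1p 1 1 ω = 0} ∩ {ω | E2p 1 1 ω = 1}) *
              μ[|{ω | Y1p 1 1 ω = 0}] {ω | Wp 1 1 ω = 1} := by rw [← condSplit hCm hCne]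
          _ = μ {ω | Y1p 1 1 ω = 0 ∧ E2p 1 1 ω = 1} *
              μ[|{ω | Y1p 1 1 ω = 0}] {ω | Wp 1 1 ω = 1} := by rw [← e2]
      have f4 : μ {ω | Y1p 1 1 ω = 0 ∧ E2p 1 1 ω = 1} *
          μ[|{ω | Y1p 1 1 ω = 0 ∧ E2p 1 1 ω = 1}] {ω | E1p 1 ω = 1} =
          μ {ω | E1p 1 ω = 1 ∧ Y1p 1 1 ω = 0} *
          μ[|{ω | E1p 1 ω = 1 ∧ Y1p 1 1 ω = 0}] {ω | E2p 1 1 ω = 1} := by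
        rw [← condSplit hCDm hCD, ← condSplit hECm hECne]
        congr 1
        ext ω; simp only [Set.mem_setOf_eq, Set.mem_inter_iff]; tauto
      have f5 : μ {ω | Y1p 1 1 ω = 0} * μ[|{ω | Y1p 1 1 ω = 0}] {ω | Wp 1 1 ω = 1} =
          μ ({ω | Y1p 1 1 ω = 0} ∩ {ω | Wp 1 1 ω = 1}) := (condSplit hCm hCne _).symm
      have f6 : μ {ω | E1p 1 ω = 1 ∧ Y1p 1 1 ω = 0} =
          μ {ω | E1p 1 ω = 1} * μ {ω | Y1p 1 1 ω = 0} :=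
        indepSets (heeY1 1 h1 1 h1) 1 0
      calc μ {ω | E1p 1 ω = 1 ∧ Y1p 1 1 ω = 0 ∧ E2p 1 1 ω = 1 ∧ Wp 1 1 ω = 1}
          = μ ({ω | Y1p 1 1 ω = 0 ∧ E2p 1 1 ω = 1} ∩
              ({ω | E1p 1 ω = 1} ∩ {ω | Wp 1 1 ω = 1})) := by rw [hrw]
        _ = μ {ω | Y1p 1 1 ω = 0 ∧ E2p 1 1 ω = 1} *
            μ[|{ω | Y1p 1 1 ω = 0 ∧ E2p 1 1 ω = 1}]
              ({ω | E1p 1 ω = 1} ∩ {ω | Wp 1 1 ω = 1}) := condSplit hCDm hCD _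
        _ = μ {ω | Y1p 1 1 ω = 0 ∧ E2p 1 1 ω = 1} *
            (μ[|{ω | Y1p 1 1 ω = 0 ∧ E2p 1 1 ω = 1}] {ω | E1p 1 ω = 1} *
             μ[|{ω | Y1p 1 1 ω = 0 ∧ E2p 1 1 ω = 1}] {ω | Wp 1 1 ω = 1}) := by
            rw [indepSets (hextee1 1 h1 1 h1) 1 1]
        _ = (μ {ω | Y1p 1 1 ω = 0 ∧ E2p 1 1 ω = 1} *
             μ[|{ω | Y1p 1 1 ω = 0 ∧ E2p 1 1 ω = 1}] {ω | Wp 1 1 ω = 1}) *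
            μ[|{ω | Y1p 1 1 ω = 0 ∧ E2p 1 1 ω = 1}] {ω | E1p 1 ω = 1} := by ring
        _ = (μ {ω | Y1p 1 1 ω = 0 ∧ E2p 1 1 ω = 1} *
             μ[|{ω | Y1p 1 1 ω = 0}] {ω | Wp 1 1 ω = 1}) *
            μ[|{ω | Y1p 1 1 ω = 0 ∧ E2p 1 1 ω = 1}] {ω | E1p 1 ω = 1} := by rw [f3]
        _ = (μ {ω | Y1p 1 1 ω = 0 ∧ E2p 1 1 ω = 1} *
             μ[|{ω | Y1p 1 1 ω = 0 ∧ E2p 1 1 ω = 1}] {ω | E1p 1 ω = 1}) *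
            μ[|{ω | Y1p 1 1 ω = 0}] {ω | Wp 1 1 ω = 1} := by ring
        _ = (μ {ω | E1p 1 ω = 1 ∧ Y1p 1 1 ω = 0} *
             μ[|{ω | E1p 1 ω = 1 ∧ Y1p 1 1 ω = 0}] {ω | E2p 1 1 ω = 1}) *
            μ[|{ω | Y1p 1 1 ω = 0}] {ω | Wp 1 1 ω = 1} := by rw [f4]
        _ = (μ {ω | E1p 1 ω = 1} * μ {ω | Y1p 1 1 ω = 0} *
             μ[|{ω | E1p 1 ω = 1 ∧ Y1p 1 1 ω = 0}] {ω | E2p 1 1 ω = 1}) *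
            μ[|{ω | Y1p 1 1 ω = 0}] {ω | Wp 1 1 ω = 1} := by rw [f6]
        _ = (μ {ω | Y1p 1 1 ω = 0} * μ[|{ω | Y1p 1 1 ω = 0}] {ω | Wp 1 1 ω = 1}) *
            μ[|{ω | E1p 1 ω = 1 ∧ Y1p 1 1 ω = 0}] {ω | E2p 1 1 ω = 1} *
            μ {ω | E1p 1 ω = 1} := by ring
        _ = μ ({ω | Y1p 1 1 ω = 0} ∩ {ω | Wp 1 1 ω = 1}) *
            μ[|{ω | E1p 1 ω = 1 ∧ Y1p 1 1 ω = 0}] {ω | E2p 1 1 ω = 1} *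
            μ {ω | E1p 1 ω = 1} := by rw [f5]
        _ = μ {ω | Y2p 1 1 ω = 1 ∧ Y1p 1 1 ω = 0} *
            μ[|{ω | E1p 1 ω = 1 ∧ Y1p 1 1 ω = 0}] {ω | E2p 1 1 ω = 1} *
            μ {ω | E1p 1 ω = 1} := by rw [hCW]
  -- Blinding
  have hblind : μ {ω | E1p 0 ω = 0 ∧ E2p 0 0 ω = 1} = μ {ω | E1p 1 ω = 0 ∧ E2p 1 0 ω = 1} := by
    apply measure_congr
    rw [Filter.eventuallyEq_set]
    filter_upwards [hblind1, hblind2] with ω hb1 hb2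
    simp only [Set.mem_setOf_eq, hb1, hb2]
  -- Conditional expectations of DY2
  have hA1ne : μ {ω | A ω = 1} ≠ 0 := by
    intro h
    rw [h] at hpos
    simp at hpos
  have hA0ne : μ {ω | A ω = 0} ≠ 0 := by
    intro h
    rw [cond_eq_zero_of_meas_eq_zero h] at hd2
    simp at hd2
  have hD2 : ∀ a ∈ ({0,1}:Set ℝ), μ {ω | A ω = a} ≠ 0 →
      ∫ ω, DY2 ω ∂(μ[|{ω | A ω = a}]) =
      (μ ({ω | E1p a ω = 0 ∧ E2p a 0 ω = 1 ∧ Y2p a 1 ω = 1} ∪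
        {ω | E1p a ω = 1 ∧ Y1p a 1 ω = 0 ∧ E2p a 1 ω = 1 ∧ Wp a 1 ω = 1})).toReal := by
    intro a ha hAne
    haveI := cond_isProbabilityMeasure (μ := μ) hAne
    have hAms : MeasurableSet {ω | A ω = a} := hAm (measurableSet_singleton a)
    rw [binInt _ hDY2m hDY2r, cond_apply hAms, keyA a ha]
    congr 1
    rcases ha with rfl | ha
    · rw [hexch0, ← mul_assoc, ENNReal.inv_mul_cancel hAne (measure_ne_top μ _), one_mul]
    · rw [Set.mem_singleton_iff] at ha
      subst ha
      rw [hexch1, ← mul_assoc, ENNReal.inv_mul_cancel hAne (measure_ne_top μ _), one_mul]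
  have hdisj : ∀ a ∈ ({0,1}:Set ℝ),
      μ ({ω | E1p a ω = 0 ∧ E2p a 0 ω = 1 ∧ Y2p a 1 ω = 1} ∪
        {ω | E1p a ω = 1 ∧ Y1p a 1 ω = 0 ∧ E2p a 1 ω = 1 ∧ Wp a 1 ω = 1}) =
      μ {ω | E1p a ω = 0 ∧ E2p a 0 ω = 1 ∧ Y2p a 1 ω = 1} +
      μ {ω | E1p a ω = 1 ∧ Y1p a 1 ω = 0 ∧ E2p a 1 ω = 1 ∧ Wp a 1 ω = 1} := by
    intro a ha
    apply measure_union
    · rw [Set.disjoint_left]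
      rintro ω ⟨he, -, -⟩ ⟨he', -⟩
      rw [he] at he'
      norm_num at he'
    · exact ((hE1pm a ha) (measurableSet_singleton 1)).inter
        (((hY1pm a ha 1 h1) (measurableSet_singleton 0)).inter
          (((hE2pm a ha 1 h1) (measurableSet_singleton 1)).inter
            ((hWpm a ha 1 h1) (measurableSet_singleton 1))))
  -- Put things together, in real numbers
  haveI hECprob := cond_isProbabilityMeasure (μ := μ) hECne
  have hD0 : ∫ ω, DY2 ω ∂(μ[|{ω | A ω = 0}]) =
      (μ {ω | E1p 1 ω = 0 ∧ E2p 1 0 ω = 1}).toReal * (μ {ω | Y2p 0 1 ω = 1}).toReal := by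
    rw [hD2 0 h0 hA0ne, hdisj 0 h0, hS10z, add_zero, hS0eq 0 h0, hblind, ENNReal.toReal_mul]
  have hD1 : ∫ ω, DY2 ω ∂(μ[|{ω | A ω = 1}]) =
      (μ {ω | E1p 1 ω = 0 ∧ E2p 1 0 ω = 1}).toReal * (μ {ω | Y2p 1 1 ω = 1}).toReal +
      (μ {ω | Y2p 1 1 ω = 1 ∧ Y1p 1 1 ω = 0}).toReal *
        ((μ[|{ω | E1p 1 ω = 1 ∧ Y1p 1 1 ω = 0}]) {ω | E2p 1 1 ω = 1}).toReal *
        (μ {ω | E1p 1 ω = 1}).toReal := by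
    rw [hD2 1 h1 hA1ne, hdisj 1 h1, hS0eq 1 h1, hS11eq,
      ENNReal.toReal_add (by finiteness) (by finiteness),
      ENNReal.toReal_mul, ENNReal.toReal_mul, ENNReal.toReal_mul]
  have hY1int : ∫ ω, Y2p 1 1 ω ∂μ = (μ {ω | Y2p 1 1 ω = 1}).toReal :=
    binInt μ (hY2pm 1 h1 1 h1) (hY2pr 1 h1 1 h1)
  have hY0int : ∫ ω, Y2p 0 1 ω ∂μ = (μ {ω | Y2p 0 1 ω = 1}).toReal :=
    binInt μ (hY2pm 0 h0 1 h1) (hY2pr 0 h0 1 h1)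
  rw [hD0] at hd2
  rw [hY0int] at hd5
  have hknn : (0:ℝ) ≤ (μ {ω | E1p 1 ω = 0 ∧ E2p 1 0 ω = 1}).toReal := ENNReal.toReal_nonneg
  have hk : (0:ℝ) < (μ {ω | E1p 1 ω = 0 ∧ E2p 1 0 ω = 1}).toReal := by
    rcases hknn.lt_or_eq with h | h
    · exact h
    · rw [← h, zero_mul] at hd2
      exact absurd hd2 (lt_irrefl 0)
  have ht : (0:ℝ) ≤ (μ {ω | Y2p 1 1 ω = 1 ∧ Y1p 1 1 ω = 0}).toReal *
        ((μ[|{ω | E1p 1 ω = 1 ∧ Y1p 1 1 ω = 0}]) {ω | E2p 1 1 ω = 1}).toReal *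
        (μ {ω | E1p 1 ω = 1}).toReal := by positivity
  rw [hD0, hD1, hY1int, hY0int]
  set k := (μ {ω | E1p 1 ω = 0 ∧ E2p 1 0 ω = 1}).toReal
  set y1 := (μ {ω | Y2p 1 1 ω = 1}).toReal
  set y0 := (μ {ω | Y2p 0 1 ω = 1}).toReal
  set t := (μ {ω | Y2p 1 1 ω = 1 ∧ Y1p 1 1 ω = 0}).toReal *
        ((μ[|{ω | E1p 1 ω = 1 ∧ Y1p 1 1 ω = 0}]) {ω | E2p 1 1 ω = 1}).toReal *
        (μ {ω | E1p 1 ω = 1}).toReal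
  constructor
  · field_simp
  · have h2 : y1 / y0 + -(t / (k * y0)) ≤ y1 / y0 := by
      have : 0 ≤ t / (k * y0) := div_nonneg ht (le_of_lt (mul_pos hk hd5))
      linarith
    have heq : (k * y1 + t) / (k * y0) = y1 / y0 + t / (k * y0) := by
      field_simp
    rw [heq]
    have : 0 ≤ t / (k * y0) := div_nonneg ht (le_of_lt (mul_pos hk hd5))
    linarith
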